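/- arXiv:2102.10331 — 2 statements merged into one kernel-verified Lean document; each statement's English description precedes it below -/
import Mathlib

section
/- Let M be an m × n real matrix with (reduced) SVD M = UΣVᵀ where Σ has strictly positive diagonal entries. Then for any matrix W with UᵀW = 0, WV = 0, and operator norm ‖W‖₂ ≤ 1, the matrix UVᵀ + W is a subgradient of the nuclear norm at M, i.e., for all matrices N, ‖N‖_* ≥ ‖M‖_* + ⟨UVᵀ + W, N - M⟩, where ⟨A,B⟩ = trace(AᵀB). -/
open Matrix BigOperators

noncomputable def singVal {m n : ℕ} (M : Matrix (Fin m) (Fin n) ℝ) (i : Fin n) : ℝ :=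
  Real.sqrt ((Matrix.isHermitian_conjTranspose_mul_self M).eigenvalues i)

noncomputable def nuclearNorm {m n : ℕ} (M : Matrix (Fin m) (Fin n) ℝ) : ℝ :=
  ∑ i, singVal M i

noncomputable def frobNorm {m n : ℕ} (M : Matrix (Fin m) (Fin n) ℝ) : ℝ :=
  Real.sqrt (Matrix.trace (Mᵀ * M))

noncomputable def finner {m n : ℕ} (A B : Matrix (Fin m) (Fin n) ℝ) : ℝ :=
  Matrix.trace (Aᵀ * B)

noncomputable def opNorm {m n : ℕ} (M : Matrix (Fin m) (Fin n) ℝ) : ℝ :=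
  ‖LinearMap.toContinuousLinearMap (Matrix.toEuclideanLin M)‖

section Auxiliary

lemma dotSelf_nonneg' {k : ℕ} (x : Fin k → ℝ) : 0 ≤ x ⬝ᵥ x :=
  Finset.sum_nonneg fun _ _ => mul_self_nonneg _

lemma dot_CS' {k : ℕ} (x y : Fin k → ℝ) :
    x ⬝ᵥ y ≤ Real.sqrt (x ⬝ᵥ x) * Real.sqrt (y ⬝ᵥ y) := by
  simpa [dotProduct, pow_two] using Real.sum_mul_le_sqrt_mul_sqrt Finset.univ x y

lemma L0 {p q k : ℕ} (A : Matrix (Fin k) (Fin p) ℝ) (B : Matrix (Fin k) (Fin q) ℝ)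
    (x : Fin p → ℝ) (y : Fin q → ℝ) :
    (A *ᵥ x) ⬝ᵥ (B *ᵥ y) = x ⬝ᵥ ((Aᵀ * B) *ᵥ y) := by
  rw [← mulVec_mulVec, dotProduct_mulVec x, vecMul_transpose]

lemma L0' {p q : ℕ} (A : Matrix (Fin p) (Fin q) ℝ) (x : Fin p → ℝ) (y : Fin q → ℝ) :
    x ⬝ᵥ (A *ᵥ y) = (Aᵀ *ᵥ x) ⬝ᵥ y := by
  rw [dotProduct_mulVec, ← mulVec_transpose]

lemma colv_eq {p q k : ℕ} (S : Matrix (Fin p) (Fin q) ℝ) (Y : Matrix (Fin q) (Fin k) ℝ)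
    (j : Fin k) : (fun l => (S * Y) l j) = S *ᵥ (fun t => Y t j) := by
  ext l; simp [mul_apply, mulVec, dotProduct]

lemma mulVec_col_apply' {p q k : ℕ} (S : Matrix (Fin p) (Fin q) ℝ) (Y : Matrix (Fin q) (Fin k) ℝ)
    (j : Fin k) (l : Fin p) : (S *ᵥ (fun t => Y t j)) l = (S * Y) l j := by
  rw [← colv_eq]

lemma entry_dot {p q : ℕ} (X Y : Matrix (Fin p) (Fin q) ℝ)
    (i j : Fin q) : (Xᵀ * Y) i j = (fun k => X k i) ⬝ᵥ (fun k => Y k j) := by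
  simp [mul_apply, dotProduct]

lemma row_sq {p q : ℕ} (X : Matrix (Fin p) (Fin q) ℝ) (j : Fin p) :
    (X * Xᵀ) j j = ∑ i, (X j i) ^ 2 := by
  simp [mul_apply, pow_two]

lemma trace_expand {p q : ℕ} (A B : Matrix (Fin p) (Fin q) ℝ) (Q : Matrix (Fin q) (Fin q) ℝ)
    (hQ : Q * Qᵀ = 1) :
    Matrix.trace (Aᵀ * B) = ∑ i, (A *ᵥ fun k => Q k i) ⬝ᵥ (B *ᵥ fun k => Q k i) := by
  have h1 : ∀ i : Fin q, (A *ᵥ fun k => Q k i) ⬝ᵥ (B *ᵥ fun k => Q k i)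
      = (Qᵀ * (Aᵀ * B) * Q) i i := by
    intro i
    rw [L0, mul_assoc, entry_dot Q (Aᵀ * B * Q) i i, colv_eq]
  calc Matrix.trace (Aᵀ * B) = Matrix.trace (Aᵀ * B * (Q * Qᵀ)) := by rw [hQ, mul_one]
    _ = Matrix.trace (Qᵀ * (Aᵀ * B) * Q) := by
        rw [← mul_assoc, trace_mul_comm, ← mul_assoc]
    _ = ∑ i, (Qᵀ * (Aᵀ * B) * Q) i i := by rw [Matrix.trace]; rfl
    _ = _ := by simp [h1]

lemma svd_facts {p q : ℕ} (N : Matrix (Fin p) (Fin q) ℝ) :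
    ∃ Q : Matrix (Fin q) (Fin q) ℝ, Q * Qᵀ = 1 ∧ Qᵀ * Q = 1 ∧
      (N * Q)ᵀ * (N * Q)
        = Matrix.diagonal ((Matrix.isHermitian_conjTranspose_mul_self N).eigenvalues) := by
  set hA := Matrix.isHermitian_conjTranspose_mul_self N
  set Q : Matrix (Fin q) (Fin q) ℝ := (hA.eigenvectorUnitary : Matrix (Fin q) (Fin q) ℝ)
  have hQQt : Q * Qᵀ = 1 := by
    have := (Matrix.mem_unitaryGroup_iff).mp hA.eigenvectorUnitary.2
    simp [Matrix.star_eq_conjTranspose, Matrix.conjTranspose_eq_transpose_of_trivial] at this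
    exact this
  have hQtQ : Qᵀ * Q = 1 := by
    have := (Matrix.mem_unitaryGroup_iff').mp hA.eigenvectorUnitary.2
    simp [Matrix.star_eq_conjTranspose, Matrix.conjTranspose_eq_transpose_of_trivial] at this
    exact this
  refine ⟨Q, hQQt, hQtQ, ?_⟩
  have hspec : Nᴴ * N = Q * Matrix.diagonal (RCLike.ofReal ∘ hA.eigenvalues) * Qᵀ := by
    have := hA.spectral_theorem
    simp [Matrix.star_eq_conjTranspose, Matrix.conjTranspose_eq_transpose_of_trivial] at this
    exact this
  have hNt : Nᴴ = Nᵀ := Matrix.conjTranspose_eq_transpose_of_trivial N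
  have hdiag : Matrix.diagonal (RCLike.ofReal ∘ hA.eigenvalues)
      = Matrix.diagonal hA.eigenvalues := by
    rw [RCLike.ofReal_real_eq_id]; rfl
  have hspec2 : Nᵀ * N = Q * Matrix.diagonal hA.eigenvalues * Qᵀ := by
    rw [hdiag] at hspec; rw [← hNt]; exact hspec
  calc (N * Q)ᵀ * (N * Q) = Qᵀ * (Nᵀ * N) * Q := by
        rw [Matrix.transpose_mul]; simp only [Matrix.mul_assoc]
    _ = Qᵀ * (Q * Matrix.diagonal hA.eigenvalues * Qᵀ) * Q := by
        rw [hspec2]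
    _ = (Qᵀ * Q) * Matrix.diagonal hA.eigenvalues * (Qᵀ * Q) := by
        simp only [mul_assoc]
    _ = Matrix.diagonal hA.eigenvalues := by rw [hQtQ, one_mul, mul_one]

lemma dual_le {m n : ℕ} (G N : Matrix (Fin m) (Fin n) ℝ)
    (hG : ∀ x : Fin n → ℝ, (G *ᵥ x) ⬝ᵥ (G *ᵥ x) ≤ x ⬝ᵥ x) :
    finner G N ≤ nuclearNorm N := by
  obtain ⟨Q, hQQt, hQtQ, hdiag⟩ := svd_facts N
  rw [finner, trace_expand G N Q hQQt, nuclearNorm]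
  apply Finset.sum_le_sum
  intro i _
  set lam := (Matrix.isHermitian_conjTranspose_mul_self N).eigenvalues with hlam
  have hp : (N *ᵥ fun k => Q k i) ⬝ᵥ (N *ᵥ fun k => Q k i) = lam i := by
    have h1 : ((N * Q)ᵀ * (N * Q)) i i = lam i := by rw [hdiag]; simp
    rw [entry_dot (N * Q) (N * Q) i i, colv_eq] at h1
    exact h1
  have hq : (fun k => Q k i) ⬝ᵥ (fun k => Q k i) = 1 := by
    have h1 : (Qᵀ * Q) i i = 1 := by rw [hQtQ]; simp
    rw [entry_dot Q Q i i] at h1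
    exact h1
  calc (G *ᵥ fun k => Q k i) ⬝ᵥ (N *ᵥ fun k => Q k i)
      ≤ Real.sqrt ((G *ᵥ fun k => Q k i) ⬝ᵥ (G *ᵥ fun k => Q k i))
        * Real.sqrt ((N *ᵥ fun k => Q k i) ⬝ᵥ (N *ᵥ fun k => Q k i)) := dot_CS' _ _
    _ ≤ Real.sqrt 1 * Real.sqrt (lam i) := by
        rw [hp]
        apply mul_le_mul_of_nonneg_right _ (Real.sqrt_nonneg _)
        apply Real.sqrt_le_sqrt
        rw [← hq]
        exact hG _
    _ = singVal N i := by rw [Real.sqrt_one, one_mul, singVal]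

lemma opbound {m n : ℕ} (W : Matrix (Fin m) (Fin n) ℝ) (h : opNorm W ≤ 1) :
    ∀ x : Fin n → ℝ, (W *ᵥ x) ⬝ᵥ (W *ᵥ x) ≤ x ⬝ᵥ x := by
  intro x
  set y : EuclideanSpace ℝ (Fin n) := (WithLp.equiv 2 (Fin n → ℝ)).symm x
  have happ : Matrix.toEuclideanLin W y = (WithLp.equiv 2 (Fin m → ℝ)).symm (W *ᵥ x) := by
    rw [Matrix.toEuclideanLin_apply]
    simp [y]
  have hb : ‖Matrix.toEuclideanLin W y‖ ≤ ‖y‖ := by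
    have h1 : ‖(LinearMap.toContinuousLinearMap (Matrix.toEuclideanLin W)) y‖
        ≤ opNorm W * ‖y‖ := ContinuousLinearMap.le_opNorm _ y
    have h2 : (LinearMap.toContinuousLinearMap (Matrix.toEuclideanLin W)) y
        = Matrix.toEuclideanLin W y := rfl
    rw [h2] at h1
    calc ‖Matrix.toEuclideanLin W y‖ ≤ opNorm W * ‖y‖ := h1
      _ ≤ 1 * ‖y‖ := by
          apply mul_le_mul_of_nonneg_right h (norm_nonneg y)
      _ = ‖y‖ := one_mul _
  have hny : ‖y‖ = Real.sqrt (x ⬝ᵥ x) := by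
    rw [EuclideanSpace.norm_eq]
    congr 1
    simp [y, dotProduct, PiLp.toLp_apply, Real.norm_eq_abs, sq_abs, pow_two]
  have hnz : ‖Matrix.toEuclideanLin W y‖ = Real.sqrt ((W *ᵥ x) ⬝ᵥ (W *ᵥ x)) := by
    rw [happ, EuclideanSpace.norm_eq]
    congr 1
    simp [dotProduct, PiLp.toLp_apply, Real.norm_eq_abs, sq_abs, pow_two]
  rw [hnz, hny] at hb
  have hnn1 : 0 ≤ (W *ᵥ x) ⬝ᵥ (W *ᵥ x) := Finset.sum_nonneg fun i _ => mul_self_nonneg _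
  have hnn2 : 0 ≤ x ⬝ᵥ x := Finset.sum_nonneg fun i _ => mul_self_nonneg _
  calc (W *ᵥ x) ⬝ᵥ (W *ᵥ x) = Real.sqrt ((W *ᵥ x) ⬝ᵥ (W *ᵥ x)) ^ 2 := (Real.sq_sqrt hnn1).symm
    _ ≤ Real.sqrt (x ⬝ᵥ x) ^ 2 := by
        apply pow_le_pow_left₀ (Real.sqrt_nonneg _) hb
    _ = x ⬝ᵥ x := Real.sq_sqrt hnn2

lemma gbound {m n r : ℕ} (U : Matrix (Fin m) (Fin r) ℝ) (V : Matrix (Fin n) (Fin r) ℝ)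
    (W : Matrix (Fin m) (Fin n) ℝ)
    (hU : Uᵀ * U = 1) (hV : Vᵀ * V = 1) (hUW : Uᵀ * W = 0) (hWV : W * V = 0)
    (hW : ∀ x : Fin n → ℝ, (W *ᵥ x) ⬝ᵥ (W *ᵥ x) ≤ x ⬝ᵥ x) :
    ∀ x : Fin n → ℝ, ((U * Vᵀ + W) *ᵥ x) ⬝ᵥ ((U * Vᵀ + W) *ᵥ x) ≤ x ⬝ᵥ x := by
  intro x
  set a : Fin r → ℝ := Vᵀ *ᵥ x with ha
  have hsplit : (U * Vᵀ + W) *ᵥ x = U *ᵥ a + W *ᵥ x := by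
    rw [add_mulVec, ← mulVec_mulVec]
  have huu : (U *ᵥ a) ⬝ᵥ (U *ᵥ a) = a ⬝ᵥ a := by
    rw [L0, hU, one_mulVec]
  have huw : (U *ᵥ a) ⬝ᵥ (W *ᵥ x) = 0 := by
    rw [L0, hUW, zero_mulVec, dotProduct_zero]
  have hxa : x ⬝ᵥ (V *ᵥ a) = a ⬝ᵥ a := by
    rw [dotProduct_mulVec, ← mulVec_transpose, ← ha]
  have hva : (V *ᵥ a) ⬝ᵥ (V *ᵥ a) = a ⬝ᵥ a := by
    rw [L0, hV, one_mulVec]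
  have hwx : W *ᵥ x = W *ᵥ (x - V *ᵥ a) := by
    rw [mulVec_sub, mulVec_mulVec, hWV, zero_mulVec, sub_zero]
  have hww : (W *ᵥ x) ⬝ᵥ (W *ᵥ x) ≤ x ⬝ᵥ x - a ⬝ᵥ a := by
    rw [hwx]
    calc (W *ᵥ (x - V *ᵥ a)) ⬝ᵥ (W *ᵥ (x - V *ᵥ a)) ≤ (x - V *ᵥ a) ⬝ᵥ (x - V *ᵥ a) := hW _
      _ = x ⬝ᵥ x - a ⬝ᵥ a := by
          rw [sub_dotProduct, dotProduct_sub, dotProduct_sub, hva,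
            dotProduct_comm (V *ᵥ a) x, hxa]
          ring
  rw [hsplit, add_dotProduct, dotProduct_add, dotProduct_add, huu, huw,
    dotProduct_comm (W *ᵥ x) (U *ᵥ a), huw]
  linarith

lemma proj_bound {p : ℕ} (P : Matrix (Fin p) (Fin p) ℝ) (hsym : Pᵀ = P) (hidem : P * P = P)
    (u : Fin p → ℝ) : u ⬝ᵥ (P *ᵥ u) ≤ u ⬝ᵥ u := by
  set a := P *ᵥ u with hadef
  have h1 : a ⬝ᵥ a = a ⬝ᵥ u := by
    rw [hadef, L0 P P u u, hsym, hidem, ← hadef, dotProduct_comm]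
  have hcs : (a ⬝ᵥ u) ^ 2 ≤ (a ⬝ᵥ a) * (u ⬝ᵥ u) := by
    simpa [dotProduct, pow_two] using Finset.sum_mul_sq_le_sq_mul_sq Finset.univ a u
  have h0 : 0 ≤ a ⬝ᵥ u := h1 ▸ dotSelf_nonneg' a
  rw [dotProduct_comm]
  nlinarith [dotSelf_nonneg' u, hcs, h1, h0]

lemma nuclear_le {m n r : ℕ} (M : Matrix (Fin m) (Fin n) ℝ)
    (U : Matrix (Fin m) (Fin r) ℝ) (V : Matrix (Fin n) (Fin r) ℝ) (σ : Fin r → ℝ)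
    (hU : Uᵀ * U = 1) (hV : Vᵀ * V = 1) (hσ : ∀ i, 0 ≤ σ i)
    (hM : M = U * Matrix.diagonal σ * Vᵀ) :
    nuclearNorm M ≤ ∑ j, σ j := by
  obtain ⟨Q, hQQt, hQtQ, hdiag⟩ := svd_facts M
  set lam := (Matrix.isHermitian_conjTranspose_mul_self M).eigenvalues with hlam
  have hlam0 : ∀ i, 0 ≤ lam i := fun i => Matrix.eigenvalues_conjTranspose_mul_self_nonneg M i
  set c : Fin n → ℝ := fun i => if lam i = 0 then 0 else (Real.sqrt (lam i))⁻¹ with hc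
  set q : Fin n → Fin n → ℝ := fun i k => Q k i with hq
  set T : Matrix (Fin m) (Fin n) ℝ := Matrix.of (fun k i => c i * (M * Q) k i) with hT
  set t : Fin n → Fin m → ℝ := fun i k => T k i with ht
  have hti : ∀ i, t i = c i • (fun k => (M * Q) k i) := by intro i; rfl
  have hpp : ∀ i j : Fin n, (fun k => (M * Q) k i) ⬝ᵥ (fun k => (M * Q) k j)
      = if i = j then lam i else 0 := by
    intro i j
    rw [← entry_dot, hdiag, Matrix.diagonal_apply]
  have hTtT : Tᵀ * T = Matrix.diagonal (fun i => if lam i = 0 then (0:ℝ) else 1) := by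
    ext i j
    rw [entry_dot, Matrix.diagonal_apply]
    have heq : (fun k => T k i) ⬝ᵥ (fun k => T k j)
        = c i * (c j * ((fun k => (M * Q) k i) ⬝ᵥ (fun k => (M * Q) k j))) := by
      simp only [hT, dotProduct, Finset.mul_sum, Matrix.of_apply]
      exact Finset.sum_congr rfl fun k _ => by ring
    rw [heq, hpp i j]
    by_cases hij : i = j
    · subst hij
      simp only [if_pos rfl]
      by_cases h0 : lam i = 0
      · simp [hc, h0]
      · have hpos : 0 < lam i := lt_of_le_of_ne (hlam0 i) (Ne.symm h0)
        have hs : Real.sqrt (lam i) * Real.sqrt (lam i) = lam i := Real.mul_self_sqrt (hlam0 i)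
        have hsne : Real.sqrt (lam i) ≠ 0 := by positivity
        simp only [hc, if_neg h0]
        rw [← hs]
        field_simp
        rw [Real.sqrt_sq (Real.sqrt_nonneg _)]; simp
    · simp [hij]
  have hTdiag : T * Matrix.diagonal (fun i => if lam i = 0 then (0:ℝ) else 1) = T := by
    ext k i
    rw [Matrix.mul_diagonal]
    by_cases h0 : lam i = 0
    · simp [hT, hc, h0]
    · simp [h0]
  set P : Matrix (Fin m) (Fin m) ℝ := T * Tᵀ with hP
  have hPsym : Pᵀ = P := by rw [hP, Matrix.transpose_mul, Matrix.transpose_transpose]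
  have hPidem : P * P = P := by
    rw [hP]
    calc T * Tᵀ * (T * Tᵀ) = T * (Tᵀ * T) * Tᵀ := by simp only [Matrix.mul_assoc]
      _ = T * Tᵀ := by rw [hTtT, hTdiag]
  have hcol : ∀ i, (M *ᵥ q i) = fun k => (M * Q) k i := by
    intro i; rw [← colv_eq]
  have step1 : nuclearNorm M = ∑ i, t i ⬝ᵥ (M *ᵥ q i) := by
    rw [nuclearNorm]
    refine Finset.sum_congr rfl fun i _ => ?_
    rw [hcol i, hti i, smul_dotProduct, hpp i i, if_pos rfl, singVal, ← hlam]
    by_cases h0 : lam i = 0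
    · simp [hc, h0]
    · have hpos : 0 < lam i := lt_of_le_of_ne (hlam0 i) (Ne.symm h0)
      have hs : Real.sqrt (lam i) * Real.sqrt (lam i) = lam i := Real.mul_self_sqrt (hlam0 i)
      have hsne : Real.sqrt (lam i) ≠ 0 := by positivity
      simp only [hc, if_neg h0, smul_eq_mul]
      rw [← hs]
      field_simp
      rw [Real.sqrt_sq (Real.sqrt_nonneg _)]
  have step2 : ∀ i, t i ⬝ᵥ (M *ᵥ q i)
      = ∑ j, σ j * ((Uᵀ *ᵥ t i) j * (Vᵀ *ᵥ q i) j) := by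
    intro i
    rw [hM, ← Matrix.mulVec_mulVec, ← Matrix.mulVec_mulVec, L0']
    simp only [dotProduct, Matrix.mulVec_diagonal]
    exact Finset.sum_congr rfl fun j _ => by ring
  have keybound : ∀ j : Fin r, ∑ i, (Uᵀ *ᵥ t i) j * (Vᵀ *ᵥ q i) j ≤ 1 := by
    intro j
    have hαm : ∀ i, (Uᵀ *ᵥ t i) j = (Uᵀ * T) j i := fun i => mulVec_col_apply' Uᵀ T i j
    have hβm : ∀ i, (Vᵀ *ᵥ q i) j = (Vᵀ * Q) j i := fun i => mulVec_col_apply' Vᵀ Q i j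
    have hasq : ∑ i, ((Uᵀ * T) j i) ^ 2 ≤ 1 := by
      have e1 : ((Uᵀ * T) * (Uᵀ * T)ᵀ) j j = ∑ i, ((Uᵀ * T) j i) ^ 2 := row_sq _ j
      have e2 : (Uᵀ * T) * (Uᵀ * T)ᵀ = Uᵀ * (P * U) := by
        rw [Matrix.transpose_mul, Matrix.transpose_transpose, hP]
        simp only [Matrix.mul_assoc]
      have e3 : (Uᵀ * (P * U)) j j = (fun k => U k j) ⬝ᵥ (P *ᵥ (fun k => U k j)) := by
        rw [entry_dot U (P * U) j j, colv_eq]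
      have e4 : (fun k => U k j) ⬝ᵥ (fun k => U k j) = 1 := by
        rw [← entry_dot, hU]; simp [Matrix.one_apply]
      rw [← e1, e2, e3]
      calc (fun k => U k j) ⬝ᵥ (P *ᵥ (fun k => U k j))
          ≤ (fun k => U k j) ⬝ᵥ (fun k => U k j) := proj_bound P hPsym hPidem _
        _ = 1 := e4
    have hbsq : ∑ i, ((Vᵀ * Q) j i) ^ 2 = 1 := by
      have e1 : ((Vᵀ * Q) * (Vᵀ * Q)ᵀ) j j = ∑ i, ((Vᵀ * Q) j i) ^ 2 := row_sq _ j
      have e2 : (Vᵀ * Q) * (Vᵀ * Q)ᵀ = 1 := by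
        rw [Matrix.transpose_mul, Matrix.transpose_transpose]
        calc (Vᵀ * Q) * (Qᵀ * V) = Vᵀ * (Q * Qᵀ) * V := by simp only [Matrix.mul_assoc]
          _ = 1 := by rw [hQQt, Matrix.mul_one, hV]
      rw [← e1, e2]; simp [Matrix.one_apply]
    calc ∑ i, (Uᵀ *ᵥ t i) j * (Vᵀ *ᵥ q i) j
        = ∑ i, (Uᵀ * T) j i * (Vᵀ * Q) j i :=
          Finset.sum_congr rfl fun i _ => by rw [hαm i, hβm i]
      _ ≤ Real.sqrt (∑ i, ((Uᵀ * T) j i) ^ 2) * Real.sqrt (∑ i, ((Vᵀ * Q) j i) ^ 2) :=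
          Real.sum_mul_le_sqrt_mul_sqrt _ _ _
      _ ≤ 1 * 1 := by
          apply mul_le_mul
          · rw [← Real.sqrt_one]; exact Real.sqrt_le_sqrt (by linarith [hasq])
          · rw [← Real.sqrt_one]; exact Real.sqrt_le_sqrt (by linarith [hbsq])
          · exact Real.sqrt_nonneg _
          · norm_num
      _ = 1 := by norm_num
  calc nuclearNorm M = ∑ i, t i ⬝ᵥ (M *ᵥ q i) := step1
    _ = ∑ i, ∑ j, σ j * ((Uᵀ *ᵥ t i) j * (Vᵀ *ᵥ q i) j) :=
        Finset.sum_congr rfl fun i _ => step2 i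
    _ = ∑ j, σ j * ∑ i, (Uᵀ *ᵥ t i) j * (Vᵀ *ᵥ q i) j := by
        rw [Finset.sum_comm]
        exact Finset.sum_congr rfl fun j _ => by rw [Finset.mul_sum]
    _ ≤ ∑ j, σ j * 1 :=
        Finset.sum_le_sum fun j _ => mul_le_mul_of_nonneg_left (keybound j) (hσ j)
    _ = ∑ j, σ j := by simp

lemma finner_eq_sum {m n r : ℕ}
    (U : Matrix (Fin m) (Fin r) ℝ) (V : Matrix (Fin n) (Fin r) ℝ) (σ : Fin r → ℝ)
    (hV : Vᵀ * V = 1)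
    (W : Matrix (Fin m) (Fin n) ℝ)
    (hUW : Uᵀ * W = 0) (hU : Uᵀ * U = 1) :
    Matrix.trace ((U * Vᵀ + W)ᵀ * (U * Matrix.diagonal σ * Vᵀ)) = ∑ j, σ j := by
  have hWtU : Wᵀ * U = 0 := by
    have := congrArg Matrix.transpose hUW
    simpa [Matrix.transpose_mul] using this
  have h1 : (U * Vᵀ + W)ᵀ = V * Uᵀ + Wᵀ := by
    rw [Matrix.transpose_add, Matrix.transpose_mul, Matrix.transpose_transpose]
  rw [h1, Matrix.add_mul, Matrix.trace_add]
  have h2 : V * Uᵀ * (U * Matrix.diagonal σ * Vᵀ) = V * Matrix.diagonal σ * Vᵀ := by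
    calc V * Uᵀ * (U * Matrix.diagonal σ * Vᵀ) = V * (Uᵀ * U) * (Matrix.diagonal σ * Vᵀ) := by
          simp only [Matrix.mul_assoc]
      _ = V * Matrix.diagonal σ * Vᵀ := by rw [hU, Matrix.mul_one, Matrix.mul_assoc]
  have h3 : Wᵀ * (U * Matrix.diagonal σ * Vᵀ) = 0 := by
    calc Wᵀ * (U * Matrix.diagonal σ * Vᵀ) = (Wᵀ * U) * (Matrix.diagonal σ * Vᵀ) := by
          simp only [Matrix.mul_assoc]
      _ = 0 := by rw [hWtU, Matrix.zero_mul]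
  rw [h2, h3, Matrix.trace_zero, add_zero, Matrix.mul_assoc, Matrix.trace_mul_comm,
    Matrix.mul_assoc, hV, Matrix.mul_one, Matrix.trace_diagonal]

end Auxiliary

/-- If M = UΣVᵀ (reduced SVD, Σ positive diagonal), UᵀW = 0, WV = 0 and
‖W‖₂ ≤ 1, then UVᵀ + W is a subgradient of the nuclear norm at M. -/
theorem nuclearNorm_subgradient {m n r : ℕ}
    (M : Matrix (Fin m) (Fin n) ℝ)
    (U : Matrix (Fin m) (Fin r) ℝ) (V : Matrix (Fin n) (Fin r) ℝ) (σ : Fin r → ℝ)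
    (hU : Uᵀ * U = 1) (hV : Vᵀ * V = 1) (hσ : ∀ i, 0 < σ i)
    (hM : M = U * Matrix.diagonal σ * Vᵀ)
    (W : Matrix (Fin m) (Fin n) ℝ)
    (hUW : Uᵀ * W = 0) (hWV : W * V = 0) (hWnorm : opNorm W ≤ 1) :
    ∀ N : Matrix (Fin m) (Fin n) ℝ,
      nuclearNorm N ≥ nuclearNorm M + finner (U * Vᵀ + W) (N - M) := by
  intro N
  have hWpt := opbound W hWnorm
  have hGpt := gbound U V W hU hV hUW hWV hWpt
  have h1 : finner (U * Vᵀ + W) N ≤ nuclearNorm N := dual_le _ N hGpt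
  have h2 : nuclearNorm M ≤ ∑ j, σ j := nuclear_le M U V σ hU hV (fun i => (hσ i).le) hM
  have h3 : finner (U * Vᵀ + W) M = ∑ j, σ j := by
    rw [finner, hM]
    exact finner_eq_sum U V σ hV W hUW hU
  have h4 : finner (U * Vᵀ + W) (N - M)
      = finner (U * Vᵀ + W) N - finner (U * Vᵀ + W) M := by
    rw [finner, finner, finner, Matrix.mul_sub, Matrix.trace_sub]
  rw [ge_iff_le, h4]
  linarith
end

section
/- The singular value thresholding operator is non-expansive: for any τ > 0 and real m × n matrices A, B, ‖D_τ(A) - D_τ(B)‖_F ≤ ‖A - B‖_F. -/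
open Matrix BigOperators

lemma finner_eq_sum_s9 {m n : ℕ} (A B : Matrix (Fin m) (Fin n) ℝ) :
    finner A B = ∑ i, ∑ j, A i j * B i j := by
  simp [finner, Matrix.trace, Matrix.mul_apply, Matrix.diag]
  rw [Finset.sum_comm]

lemma finner_svd {m n r s : ℕ}
    (U1 : Matrix (Fin m) (Fin r) ℝ) (V1 : Matrix (Fin n) (Fin r) ℝ)
    (U2 : Matrix (Fin m) (Fin s) ℝ) (V2 : Matrix (Fin n) (Fin s) ℝ)
    (c : Fin r → ℝ) (t : Fin s → ℝ) :
    finner (U1 * Matrix.diagonal c * V1ᵀ) (U2 * Matrix.diagonal t * V2ᵀ)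
      = ∑ i, ∑ j, c i * t j * ((U1ᵀ*U2) i j) * ((V1ᵀ*V2) i j) := by
  have h : (U1 * Matrix.diagonal c * V1ᵀ)ᵀ * (U2 * Matrix.diagonal t * V2ᵀ)
      = V1 * (Matrix.diagonal c * (U1ᵀ*U2) * Matrix.diagonal t * V2ᵀ) := by
    simp [Matrix.transpose_mul, Matrix.mul_assoc, Matrix.diagonal_transpose]
  rw [finner, h, Matrix.trace_mul_comm]
  have h2 : Matrix.diagonal c * (U1ᵀ*U2) * Matrix.diagonal t * V2ᵀ * V1
      = Matrix.diagonal c * ((U1ᵀ*U2) * (Matrix.diagonal t * (V1ᵀ*V2)ᵀ)) := by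
    simp [Matrix.mul_assoc, Matrix.transpose_mul]
  rw [h2]
  simp [Matrix.trace, Matrix.diag, Matrix.mul_apply, Matrix.diagonal_apply, ite_mul, mul_ite,
    mul_zero, zero_mul, Finset.mul_sum]
  apply Finset.sum_congr rfl; intro i _
  apply Finset.sum_congr rfl; intro j _
  apply Finset.sum_congr rfl; intro k _
  simp only [← Finset.mul_sum]
  ring

lemma col_bound {m r s : ℕ} (U : Matrix (Fin m) (Fin r) ℝ) (W : Matrix (Fin m) (Fin s) ℝ)
    (hU : Uᵀ*U = 1) (hW : Wᵀ*W = 1) (j : Fin s) :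
    ∑ i, ((Uᵀ*W) i j)^2 ≤ 1 := by
  set P := Uᵀ*W with hP
  have key : (W - U*P)ᵀ * (W - U*P) = 1 - Pᵀ*P := by
    simp [Matrix.transpose_sub, Matrix.sub_mul, Matrix.mul_sub, Matrix.transpose_mul,
      Matrix.mul_assoc, hW, hP]
    rw [show Uᵀ * (U * (Uᵀ * W)) = Uᵀ * W from by rw [← Matrix.mul_assoc, hU, Matrix.one_mul]]
    abel
  have h0 : 0 ≤ ∑ k, ((W - U*P) k j)^2 := Finset.sum_nonneg fun k _ => sq_nonneg _
  have e1 : ∑ k, ((W - U*P) k j)^2 = ((W - U*P)ᵀ*(W - U*P)) j j := by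
    simp [Matrix.mul_apply, Matrix.transpose_apply, pow_two, mul_comm]
  have e2 : ((1 : Matrix (Fin s) (Fin s) ℝ) - Pᵀ*P) j j = 1 - ∑ i, (P i j)^2 := by
    simp [Matrix.sub_apply, Matrix.one_apply, Matrix.mul_apply, Matrix.transpose_apply, pow_two]
  rw [e1, key, e2] at h0
  linarith

lemma cross_bound {m n r s : ℕ} (τ : ℝ) (hτ0 : 0 ≤ τ)
    (U1 : Matrix (Fin m) (Fin r) ℝ) (V1 : Matrix (Fin n) (Fin r) ℝ)
    (U2 : Matrix (Fin m) (Fin s) ℝ) (V2 : Matrix (Fin n) (Fin s) ℝ)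
    (hU1 : U1ᵀ*U1 = 1) (hV1 : V1ᵀ*V1 = 1) (hU2 : U2ᵀ*U2 = 1) (hV2 : V2ᵀ*V2 = 1)
    (c : Fin r → ℝ) (hc0 : ∀ i, 0 ≤ c i) (hcτ : ∀ i, c i ≤ τ)
    (t : Fin s → ℝ) (ht : ∀ j, 0 ≤ t j) :
    finner (U1 * Matrix.diagonal c * V1ᵀ) (U2 * Matrix.diagonal t * V2ᵀ) ≤ τ * ∑ j, t j := by
  rw [finner_svd]
  rw [Finset.sum_comm, Finset.mul_sum]
  apply Finset.sum_le_sum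
  intro j _
  have hbd : ∑ i, |(U1ᵀ*U2) i j| * |(V1ᵀ*V2) i j| ≤ 1 := by
    have hcs := Finset.sum_mul_sq_le_sq_mul_sq Finset.univ
      (fun i => |(U1ᵀ*U2) i j|) (fun i => |(V1ᵀ*V2) i j|)
    simp only [sq_abs] at hcs
    have h1 := col_bound U1 U2 hU1 hU2 j
    have h2 := col_bound V1 V2 hV1 hV2 j
    nlinarith [Finset.sum_nonneg (fun i (_ : i ∈ Finset.univ) =>
        mul_nonneg (abs_nonneg ((U1ᵀ*U2) i j)) (abs_nonneg ((V1ᵀ*V2) i j))),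
      Finset.sum_nonneg (fun i (_ : i ∈ Finset.univ) => sq_nonneg ((U1ᵀ*U2) i j)),
      Finset.sum_nonneg (fun i (_ : i ∈ Finset.univ) => sq_nonneg ((V1ᵀ*V2) i j))]
  calc ∑ i, c i * t j * ((U1ᵀ*U2) i j) * ((V1ᵀ*V2) i j)
      ≤ ∑ i, τ * t j * (|(U1ᵀ*U2) i j| * |(V1ᵀ*V2) i j|) := by
        apply Finset.sum_le_sum; intro i _
        have habs : c i * t j * ((U1ᵀ*U2) i j) * ((V1ᵀ*V2) i j)
            ≤ c i * t j * (|(U1ᵀ*U2) i j| * |(V1ᵀ*V2) i j|) := by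
          rw [mul_assoc]
          apply mul_le_mul_of_nonneg_left _ (mul_nonneg (hc0 i) (ht j))
          calc (U1ᵀ*U2) i j * (V1ᵀ*V2) i j ≤ |(U1ᵀ*U2) i j * (V1ᵀ*V2) i j| := le_abs_self _
            _ = |(U1ᵀ*U2) i j| * |(V1ᵀ*V2) i j| := abs_mul _ _
        refine habs.trans ?_
        apply mul_le_mul_of_nonneg_right _ (mul_nonneg (abs_nonneg _) (abs_nonneg _))
        exact mul_le_mul_of_nonneg_right (hcτ i) (ht j)
    _ = τ * t j * ∑ i, |(U1ᵀ*U2) i j| * |(V1ᵀ*V2) i j| := by rw [Finset.mul_sum]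
    _ ≤ τ * t j * 1 := by
        apply mul_le_mul_of_nonneg_left hbd
        exact mul_nonneg hτ0 (ht j)
    _ = τ * t j := mul_one _

lemma same_side {m n r : ℕ}
    (U : Matrix (Fin m) (Fin r) ℝ) (V : Matrix (Fin n) (Fin r) ℝ)
    (hU : Uᵀ*U = 1) (hV : Vᵀ*V = 1) (c t : Fin r → ℝ) :
    finner (U * Matrix.diagonal c * Vᵀ) (U * Matrix.diagonal t * Vᵀ) = ∑ i, c i * t i := by
  rw [finner_svd, hU, hV]
  simp [Matrix.one_apply]

lemma finner_sub_left {m n : ℕ} (X Y Z : Matrix (Fin m) (Fin n) ℝ) :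
    finner (X - Y) Z = finner X Z - finner Y Z := by
  simp [finner, Matrix.transpose_sub, Matrix.sub_mul]

lemma finner_sub_right {m n : ℕ} (X Y Z : Matrix (Fin m) (Fin n) ℝ) :
    finner Z (X - Y) = finner Z X - finner Z Y := by
  simp [finner, Matrix.mul_sub]

lemma frob_eq {m n : ℕ} (M : Matrix (Fin m) (Fin n) ℝ) :
    frobNorm M = Real.sqrt (finner M M) := rfl

lemma finner_self_nonneg {m n : ℕ} (M : Matrix (Fin m) (Fin n) ℝ) : 0 ≤ finner M M := by
  rw [finner_eq_sum_s9]
  exact Finset.sum_nonneg fun i _ => Finset.sum_nonneg fun j _ => mul_self_nonneg _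

lemma finner_cs {m n : ℕ} (X Y : Matrix (Fin m) (Fin n) ℝ) :
    finner X Y ≤ frobNorm X * frobNorm Y := by
  have h := Finset.sum_mul_sq_le_sq_mul_sq (Finset.univ ×ˢ Finset.univ)
    (fun p : Fin m × Fin n => X p.1 p.2) (fun p => Y p.1 p.2)
  have eXY : ∑ p ∈ Finset.univ ×ˢ Finset.univ, X p.1 p.2 * Y p.1 p.2 = finner X Y := by
    rw [finner_eq_sum_s9, Finset.sum_product]
  have eX : ∑ p ∈ Finset.univ ×ˢ Finset.univ, (X p.1 p.2)^2 = finner X X := by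
    rw [finner_eq_sum_s9, Finset.sum_product]; simp [pow_two]
  have eY : ∑ p ∈ Finset.univ ×ˢ Finset.univ, (Y p.1 p.2)^2 = finner Y Y := by
    rw [finner_eq_sum_s9, Finset.sum_product]; simp [pow_two]
  rw [eXY, eX, eY] at h
  calc finner X Y ≤ |finner X Y| := le_abs_self _
    _ = Real.sqrt ((finner X Y)^2) := (Real.sqrt_sq_eq_abs _).symm
    _ ≤ Real.sqrt (finner X X * finner Y Y) := Real.sqrt_le_sqrt h
    _ = frobNorm X * frobNorm Y := by
        rw [frob_eq, frob_eq, ← Real.sqrt_mul (finner_self_nonneg X)]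

/-- The SVT operator is non-expansive in Frobenius norm. -/
theorem svt_nonexpansive {m n rA rB : ℕ} (τ : ℝ) (hτ : 0 < τ)
    (A B : Matrix (Fin m) (Fin n) ℝ)
    (UA : Matrix (Fin m) (Fin rA) ℝ) (VA : Matrix (Fin n) (Fin rA) ℝ) (σA : Fin rA → ℝ)
    (hUA : UAᵀ * UA = 1) (hVA : VAᵀ * VA = 1) (hσA : ∀ i, 0 ≤ σA i)
    (hA : A = UA * Matrix.diagonal σA * VAᵀ)
    (UB : Matrix (Fin m) (Fin rB) ℝ) (VB : Matrix (Fin n) (Fin rB) ℝ) (σB : Fin rB → ℝ)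
    (hUB : UBᵀ * UB = 1) (hVB : VBᵀ * VB = 1) (hσB : ∀ i, 0 ≤ σB i)
    (hB : B = UB * Matrix.diagonal σB * VBᵀ)
    (DA DB : Matrix (Fin m) (Fin n) ℝ)
    (hDA : DA = UA * Matrix.diagonal (fun i => max (σA i - τ) 0) * VAᵀ)
    (hDB : DB = UB * Matrix.diagonal (fun i => max (σB i - τ) 0) * VBᵀ) :
    frobNorm (DA - DB) ≤ frobNorm (A - B) := by
  have hτ0 : (0:ℝ) ≤ τ := hτ.le
  set sA : Fin rA → ℝ := fun i => max (σA i - τ) 0 with hsA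
  set sB : Fin rB → ℝ := fun i => max (σB i - τ) 0 with hsB
  set cA : Fin rA → ℝ := fun i => min (σA i) τ with hcA
  set cB : Fin rB → ℝ := fun i => min (σB i) τ with hcB
  have hmin : ∀ (x : ℝ), 0 ≤ x → x - max (x - τ) 0 = min x τ := by
    intro x hx
    rcases le_total x τ with h | h
    · rw [max_eq_right (by linarith), min_eq_left h]; ring
    · rw [max_eq_left (by linarith), min_eq_right h]; ring
  have hCA : A - DA = UA * Matrix.diagonal cA * VAᵀ := by
    rw [hA, hDA, ← Matrix.sub_mul, ← Matrix.mul_sub]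
    congr 2
    ext i j
    rcases eq_or_ne i j with rfl | hne
    · simpa [Matrix.diagonal_apply_eq] using hmin (σA i) (hσA i)
    · simp [Matrix.diagonal_apply_ne _ hne]
  have hCB : B - DB = UB * Matrix.diagonal cB * VBᵀ := by
    rw [hB, hDB, ← Matrix.sub_mul, ← Matrix.mul_sub]
    congr 2
    ext i j
    rcases eq_or_ne i j with rfl | hne
    · simpa [Matrix.diagonal_apply_eq] using hmin (σB i) (hσB i)
    · simp [Matrix.diagonal_apply_ne _ hne]
  have hcA0 : ∀ i, 0 ≤ cA i := fun i => le_min (hσA i) hτ0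
  have hcAτ : ∀ i, cA i ≤ τ := fun i => min_le_right _ _
  have hcB0 : ∀ i, 0 ≤ cB i := fun i => le_min (hσB i) hτ0
  have hcBτ : ∀ i, cB i ≤ τ := fun i => min_le_right _ _
  have hsA0 : ∀ i, 0 ≤ sA i := fun i => le_max_right _ _
  have hsB0 : ∀ i, 0 ≤ sB i := fun i => le_max_right _ _
  -- exact values of the same-side inner products
  have hAA : finner (A - DA) DA = τ * ∑ i, sA i := by
    rw [hCA, hDA, same_side UA VA hUA hVA, Finset.mul_sum]
    apply Finset.sum_congr rfl; intro i _
    rcases le_total (σA i) τ with h | h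
    · show min (σA i) τ * max (σA i - τ) 0 = τ * max (σA i - τ) 0
      rw [max_eq_right (by linarith)]; ring
    · show min (σA i) τ * max (σA i - τ) 0 = τ * max (σA i - τ) 0
      rw [min_eq_right h]
  have hBB : finner (B - DB) DB = τ * ∑ i, sB i := by
    rw [hCB, hDB, same_side UB VB hUB hVB, Finset.mul_sum]
    apply Finset.sum_congr rfl; intro i _
    rcases le_total (σB i) τ with h | h
    · show min (σB i) τ * max (σB i - τ) 0 = τ * max (σB i - τ) 0
      rw [max_eq_right (by linarith)]; ring
    · show min (σB i) τ * max (σB i - τ) 0 = τ * max (σB i - τ) 0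
      rw [min_eq_right h]
  have hAB : finner (A - DA) DB ≤ τ * ∑ j, sB j := by
    rw [hCA, hDB]
    exact cross_bound τ hτ0 UA VA UB VB hUA hVA hUB hVB cA hcA0 hcAτ sB hsB0
  have hBA : finner (B - DB) DA ≤ τ * ∑ j, sA j := by
    rw [hCB, hDA]
    exact cross_bound τ hτ0 UB VB UA VA hUB hVB hUA hVA cB hcB0 hcBτ sA hsA0
  -- monotonicity
  have hmono : finner (DA - DB) (DA - DB) ≤ finner (A - B) (DA - DB) := by
    have expand : finner (A - B) (DA - DB) - finner (DA - DB) (DA - DB)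
        = (finner (A - DA) DA - finner (A - DA) DB)
          - (finner (B - DB) DA - finner (B - DB) DB) := by
      have e1 : A - B - (DA - DB) = (A - DA) - (B - DB) := by abel
      rw [show finner (A - B) (DA - DB) - finner (DA - DB) (DA - DB)
          = finner (A - B - (DA - DB)) (DA - DB) from
            (finner_sub_left (A - B) (DA - DB) (DA - DB)).symm,
        e1, finner_sub_left, finner_sub_right, finner_sub_right]
    have : 0 ≤ finner (A - B) (DA - DB) - finner (DA - DB) (DA - DB) := by
      rw [expand]
      have := hAA; have := hBB
      linarith
    linarith
  have hcs := finner_cs (A - B) (DA - DB)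
  have hd2 : (frobNorm (DA - DB))^2 = finner (DA - DB) (DA - DB) :=
    Real.sq_sqrt (finner_self_nonneg _)
  have hdn : 0 ≤ frobNorm (DA - DB) := Real.sqrt_nonneg _
  have han : 0 ≤ frobNorm (A - B) := Real.sqrt_nonneg _
  rcases eq_or_lt_of_le hdn with h0 | h0
  · rw [← h0]; exact han
  · nlinarith [hmono, hcs, hd2]
end
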